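/- Let β ∈ ℕ with β ≥ 1. Then there do not exist polynomials p, q ∈ ℂ[X] with q ≠ 0 such that for every z ∈ ℂ with z ≠ 0 and q(z) ≠ 0, the function w ↦ p(w)/q(w) is differentiable at z with derivative satisfying (p/q)'(z) − p(z)/q(z) = z^{−β}. Equivalently, there is no rational function q ∈ ℂ(x) with q' − q = x^{−β}, i.e., ∫ x^{−β}·e^{−x} dx cannot be written as q(x)·e^{−x} with q rational. -/

import Mathlib

open Polynomial


/-- No nonzero root of `q` when `p, q` coprime satisfy the Risch identity. -/
lemma risch_aux_root (β : ℕ) (p q : Polynomial ℂ) (hq : q ≠ 0) (hco : IsCoprime p q)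
    (hE : X ^ β * (derivative p * q - p * derivative q - p * q) = q ^ 2)
    (c : ℂ) (hroot : q.IsRoot c) : c = 0 := by
  by_contra hc
  set k := rootMultiplicity c q with hk
  have hkpos : 0 < k := (rootMultiplicity_pos hq).2 hroot
  set π : Polynomial ℂ := X - C c with hπ
  have hπprime : Prime π := prime_X_sub_C c
  -- coprimality of π with X
  have hcop1 : IsCoprime π (X : Polynomial ℂ) := by
    refine ⟨-C c⁻¹, C c⁻¹, ?_⟩
    have h1 : (-C c⁻¹) * π + C c⁻¹ * X = C c⁻¹ * C c := by rw [hπ]; ring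
    rw [h1, ← C_mul, inv_mul_cancel₀ hc, C_1]
  have hdvdq : π ^ k ∣ q := pow_rootMultiplicity_dvd q c
  have hdvd2 : π ^ (2 * k) ∣ X ^ β * (derivative p * q - p * derivative q - p * q) := by
    rw [hE, pow_mul']; exact pow_dvd_pow_of_dvd hdvdq 2
  have hdvdN : π ^ k ∣ derivative p * q - p * derivative q - p * q :=
    pow_dvd_pow π (by omega : k ≤ 2 * k) |>.trans
      ((hcop1.pow (m := 2 * k) (n := β)).dvd_of_dvd_mul_left hdvd2)
  have hdvdpq' : π ^ k ∣ p * derivative q := by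
    have h1 : p * derivative q =
        derivative p * q - p * q - (derivative p * q - p * derivative q - p * q) := by ring
    rw [h1]
    exact dvd_sub (dvd_sub (hdvdq.mul_left _) (hdvdq.mul_left _)) hdvdN
  have hπp : ¬ π ∣ p := by
    intro hdp
    exact Polynomial.not_isUnit_X_sub_C c
      (hco.isUnit_of_dvd' hdp ((dvd_pow_self π hkpos.ne').trans hdvdq))
  have hdvdq' : π ^ k ∣ derivative q := hπprime.pow_dvd_of_dvd_mul_left k hπp hdvdpq'
  have hq' : derivative q ≠ 0 := by
    intro h0
    have hdeg : q.natDegree = 0 := natDegree_eq_zero_of_derivative_eq_zero h0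
    obtain ⟨a, rfl⟩ := natDegree_eq_zero.mp hdeg
    have : a = 0 := by simpa [IsRoot] using hroot
    simp [this] at hq
  have hle : k ≤ rootMultiplicity c (derivative q) := (le_rootMultiplicity_iff hq').2 hdvdq'
  rw [derivative_rootMultiplicity_of_root hroot] at hle
  omega

lemma risch_aux_coprime (β : ℕ) (hβ : 1 ≤ β) (p q : Polynomial ℂ) (hq : q ≠ 0)
    (hco : IsCoprime p q)
    (hE : X ^ β * (derivative p * q - p * derivative q - p * q) = q ^ 2) : False := by
  classical
  obtain ⟨u, hu, hXu⟩ := q.exists_eq_pow_rootMultiplicity_mul_and_not_dvd hq 0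
  rw [C_0, sub_zero] at hu hXu
  generalize hn : rootMultiplicity 0 q = n at hu
  have hu0 : u.eval 0 ≠ 0 := by
    intro h
    exact hXu (X_dvd_iff.2 (by rwa [coeff_zero_eq_eval_zero]))
  have huroot : ∀ c : ℂ, ¬ u.IsRoot c := by
    intro c hcr
    have hqc : q.IsRoot c := by
      rw [hu]; simp [IsRoot] at hcr ⊢; right; exact hcr
    have := risch_aux_root β p q hq hco hE c hqc
    subst this
    exact hu0 hcr
  have hudeg : u.degree ≤ 0 := by
    by_contra h
    push_neg at h
    obtain ⟨z, hz⟩ := Complex.exists_root h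
    exact huroot z hz
  set a := u.coeff 0 with ha
  have hua : u = C a := eq_C_of_degree_le_zero hudeg
  have ha0 : a ≠ 0 := by
    intro h; rw [h, C_0] at hua; rw [hua] at hu0; simp at hu0
  rcases Nat.eq_zero_or_pos n with hn0 | hnpos
  · -- q is a nonzero constant
    rw [hn0, pow_zero, one_mul, hua] at hu
    have h0 := congrArg (fun r => Polynomial.eval 0 r) hE
    simp only [hu] at h0
    simp [zero_pow (by omega : β ≠ 0)] at h0
    exact ha0 (by simpa using h0.symm)
  · obtain ⟨m, rfl⟩ : ∃ m, n = m + 1 := ⟨n - 1, by omega⟩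
    rw [hua] at hu
    have hp0 : p.eval 0 ≠ 0 := by
      intro h
      have hXp : (X : Polynomial ℂ) ∣ p :=
        X_dvd_iff.2 (by rwa [coeff_zero_eq_eval_zero])
      have hXq : (X : Polynomial ℂ) ∣ q := by
        rw [hu]; exact Dvd.dvd.mul_right (dvd_pow_self X (by omega)) _
      exact Polynomial.not_isUnit_X (hco.isUnit_of_dvd' hXp hXq)
    have hp : p ≠ 0 := fun h => hp0 (by simp [h])
    have hm1 : ((m : ℂ) + 1) ≠ 0 := Nat.cast_add_one_ne_zero m
    have hq' : derivative q = C ((m : ℂ) + 1) * X ^ m * C a := by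
      rw [hu, derivative_mul, derivative_C, derivative_X_pow]
      push_cast
      ring
    set B : Polynomial ℂ := X * derivative p - C ((m : ℂ) + 1) * p - X * p with hB
    have hCa : (C a : Polynomial ℂ) ≠ 0 := by simpa using ha0
    have key : X ^ (β + m) * B = C a * X ^ (2 * m + 2) := by
      apply mul_left_cancel₀ hCa
      rw [hq', hu] at hE
      linear_combination hE
    have hBeval : B.eval 0 = -(((m : ℂ) + 1) * p.eval 0) := by simp [hB]
    have hBeval0 : B.eval 0 ≠ 0 := by
      rw [hBeval, neg_ne_zero]
      exact mul_ne_zero hm1 hp0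
    have hBne : B ≠ 0 := fun h => hBeval0 (by simp [h])
    have hBrm : rootMultiplicity 0 B = 0 :=
      rootMultiplicity_eq_zero (by simpa [IsRoot] using hBeval0)
    have hXrm : ∀ j : ℕ, rootMultiplicity (0 : ℂ) (X ^ j) = j := by
      intro j
      simpa using rootMultiplicity_X_sub_C_pow (0 : ℂ) j
    have hβm : β + m = 2 * m + 2 := by
      have h1 := congrArg (rootMultiplicity (0 : ℂ)) key
      rw [rootMultiplicity_mul (by rw [key]; exact mul_ne_zero hCa (pow_ne_zero _ X_ne_zero)),
        rootMultiplicity_mul (mul_ne_zero hCa (pow_ne_zero _ X_ne_zero)),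
        hXrm, hXrm, hBrm, rootMultiplicity_C] at h1
      omega
    have hBCa : B = C a := by
      apply mul_left_cancel₀ (pow_ne_zero (2 * m + 2) (X_ne_zero (R := ℂ)))
      calc X ^ (2 * m + 2) * B = X ^ (β + m) * B := by rw [hβm]
        _ = C a * X ^ (2 * m + 2) := key
        _ = X ^ (2 * m + 2) * C a := by ring
    -- coefficient d+1 contradiction
    set d := p.natDegree with hd
    have hcoeff : B.coeff (d + 1) = -(p.coeff d) := by
      rw [hB]
      simp only [coeff_sub, coeff_X_mul, coeff_C_mul, coeff_derivative,
        coeff_natDegree_succ_eq_zero]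
      rw [show p.coeff (d + 1) = 0 from coeff_natDegree_succ_eq_zero]
      ring
    rw [hBCa, coeff_C] at hcoeff
    simp only [Nat.add_eq_zero, and_false, if_false] at hcoeff
    have : p.coeff d = 0 := by
      have := hcoeff.symm
      simpa using this
    exact mt leadingCoeff_eq_zero.mp hp (by rwa [leadingCoeff])

lemma risch_aux (β : ℕ) (hβ : 1 ≤ β) (p q : Polynomial ℂ) (hq : q ≠ 0)
    (hE : X ^ β * (derivative p * q - p * derivative q - p * q) = q ^ 2) : False := by
  classical
  set g := GCDMonoid.gcd p q with hg
  have hgne : g ≠ 0 := gcd_ne_zero_of_right hq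
  have hp1 : g * (p / g) = p := EuclideanDomain.mul_div_cancel' hgne (gcd_dvd_left p q)
  have hq1 : g * (q / g) = q := EuclideanDomain.mul_div_cancel' hgne (gcd_dvd_right p q)
  have hq₁ : q / g ≠ 0 := right_div_gcd_ne_zero hq
  have hco : IsCoprime (p / g) (q / g) := isCoprime_div_gcd_div_gcd hq
  apply risch_aux_coprime β hβ (p / g) (q / g) hq₁ hco
  apply mul_left_cancel₀ (pow_ne_zero 2 hgne)
  have e1 : g ^ 2 * (X ^ β *
      (derivative (p / g) * (q / g) - p / g * derivative (q / g) - p / g * (q / g))) =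
      X ^ β * (derivative p * q - p * derivative q - p * q) := by
    conv_rhs => rw [← hp1, ← hq1]
    rw [derivative_mul, derivative_mul]
    ring
  rw [e1, hE]
  conv_lhs => rw [← hq1]
  ring


/-- The Risch differential equation `q' − q = x^{−β}` (with `β ∈ ℕ`, `β ≥ 1`)
has no rational solution; equivalently `∫ x^{−β} e^{−x} dx` is not of the form
`q(x) e^{−x}` with `q` rational. -/
theorem risch_equation_no_rational_solution (β : ℕ) (hβ : 1 ≤ β) :
    ¬ ∃ p q : Polynomial ℂ, q ≠ 0 ∧
      ∀ z : ℂ, z ≠ 0 → q.eval z ≠ 0 →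
        ∃ d : ℂ, HasDerivAt (fun w : ℂ => p.eval w / q.eval w) d z ∧
          d - p.eval z / q.eval z = z ^ (-(β : ℤ)) := by
  rintro ⟨p, q, hq, H⟩
  apply risch_aux β hβ p q hq
  apply eq_of_infinite_eval_eq
  have hfin : ({(0 : ℂ)} ∪ {x | q.IsRoot x}).Finite :=
    (Set.finite_singleton 0).union (finite_setOf_isRoot hq)
  refine Set.Infinite.mono ?_ hfin.infinite_compl
  intro z hz
  simp only [Set.mem_compl_iff, Set.mem_union, Set.mem_singleton_iff, Set.mem_setOf_eq,
    not_or, IsRoot] at hz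
  obtain ⟨hz0, hqz⟩ := hz
  obtain ⟨d, hd, heq⟩ := H z hz0 hqz
  have hd2 : HasDerivAt (fun w : ℂ => p.eval w / q.eval w)
      (((derivative p).eval z * q.eval z - p.eval z * (derivative q).eval z) / q.eval z ^ 2) z :=
    (p.hasDerivAt z).div (q.hasDerivAt z) hqz
  have hdd := hd.unique hd2
  have hzb : (z : ℂ) ^ (-(β : ℤ)) = (z ^ β)⁻¹ := by
    rw [zpow_neg, zpow_natCast]
  rw [hdd, hzb] at heq
  have hzβ : z ^ β ≠ 0 := pow_ne_zero _ hz0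
  show Polynomial.eval z (X ^ β * (derivative p * q - p * derivative q - p * q)) =
    Polynomial.eval z (q ^ 2)
  simp only [eval_mul, eval_pow, eval_X, eval_sub]
  field_simp at heq
  apply mul_left_cancel₀ hqz
  linear_combination eval z q * heq
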